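/- Let A be a unital C*-algebra and let U = (u_{a,x})_{a,x=1}^n be a bi-unitary matrix over A whose entries satisfy u_{a,x} u_{a,y}^* = 0 for x ≠ y and u_{a,x} u_{b,x}^* = 0 for a ≠ b. For each a set v_a = Σ_{x=1}^n u_{a,x}^*. Then each v_a is a unitary element of A, and for every a, x the element p_{a,x} := v_a u_{a,x} equals u_{a,x}^* u_{a,x} and is a projection. -/
import Mathlib


/-- the row sums v_a = Σ_x u_{a,x}^* are unitary and
v_a u_{a,x} = u_{a,x}^* u_{a,x} is a projection. -/
theorem stmt2 {A : Type*} [NormedRing A] [StarRing A] [CStarRing A]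
    [CompleteSpace A] [NormedAlgebra ℂ A] [StarModule ℂ A]
    (n : ℕ) (u : Fin n → Fin n → A)
    (hUU : ∀ a b : Fin n, ∑ x, u a x * star (u b x) = if a = b then 1 else 0)
    (hUU' : ∀ x y : Fin n, ∑ a, star (u a x) * u a y = if x = y then 1 else 0)
    (hUt : ∀ x y : Fin n, ∑ a, u a x * star (u a y) = if x = y then 1 else 0)
    (hUt' : ∀ a b : Fin n, ∑ x, star (u a x) * u b x = if a = b then 1 else 0)
    (hrow : ∀ (a : Fin n) {x y : Fin n}, x ≠ y → u a x * star (u a y) = 0)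
    (hcol : ∀ (x : Fin n) {a b : Fin n}, a ≠ b → u a x * star (u b x) = 0)
    (v : Fin n → A) (hv : ∀ a, v a = ∑ x, star (u a x)) :
    ∀ a x : Fin n,
      star (v a) * v a = 1 ∧ v a * star (v a) = 1 ∧
      v a * u a x = star (u a x) * u a x ∧
      (v a * u a x) * (v a * u a x) = v a * u a x ∧
      star (v a * u a x) = v a * u a x := by
  -- key: e_x := u a x (u a x)^* kills u a y for y ≠ x
  have key : ∀ (a x y : Fin n), x ≠ y → u a x * star (u a x) * u a y = 0 := by
    intro a x y hxy
    have h0 : ∑ b, star (u b x) * u b y = 0 := by simpa [hxy] using hUU' x y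
    have h1 : ∑ b, u a x * (star (u b x) * u b y) = 0 := by
      rw [← Finset.mul_sum, h0, mul_zero]
    rw [Finset.sum_eq_single a] at h1
    · rw [← mul_assoc] at h1; exact h1
    · intro b _ hb
      rw [← mul_assoc, hcol x (Ne.symm hb), zero_mul]
    · intro h; exact absurd (Finset.mem_univ a) h
  -- hence initial "supports" are orthogonal
  have horth : ∀ (a x y : Fin n), x ≠ y → star (u a x) * u a y = 0 := by
    intro a x y hxy
    have h2 : (star (u a x) * u a y) * star (star (u a x) * u a y) = 0 := by
      have : u a y * star (u a y) * u a x = 0 := key a y x hxy.symm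
      calc (star (u a x) * u a y) * star (star (u a x) * u a y)
          = star (u a x) * (u a y * star (u a y) * u a x) := by
            simp [mul_assoc]
        _ = 0 := by rw [this, mul_zero]
    exact (CStarRing.mul_star_self_eq_zero_iff _).mp h2
  -- e_x fixes u a x
  have efix : ∀ (a x : Fin n), u a x * star (u a x) * u a x = u a x := by
    intro a x
    have h0 : ∑ y, u a y * star (u a y) = 1 := by simpa using hUU a a
    have h1 : ∑ y, u a y * star (u a y) * u a x = u a x := by
      rw [← Finset.sum_mul, h0, one_mul]
    rw [Finset.sum_eq_single x] at h1
    · exact h1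
    · intro y _ hy; exact key a y x hy
    · intro h; exact absurd (Finset.mem_univ x) h
  intro a x
  have hst : star (v a) = ∑ y, u a y := by
    rw [hv a, star_sum]; simp
  have hiso : star (v a) * v a = 1 := by
    rw [hst, hv a, Finset.sum_mul_sum]
    rw [Finset.sum_congr rfl (fun y _ => Finset.sum_eq_single y
      (fun z _ hz => hrow a (Ne.symm hz)) (fun h => absurd (Finset.mem_univ y) h))]
    simpa using hUU a a
  have hcoiso : v a * star (v a) = 1 := by
    rw [hst, hv a, Finset.sum_mul_sum]
    rw [Finset.sum_congr rfl (fun y _ => Finset.sum_eq_single y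
      (fun z _ hz => horth a y z (Ne.symm hz)) (fun h => absurd (Finset.mem_univ y) h))]
    simpa using hUt' a a
  have hp : v a * u a x = star (u a x) * u a x := by
    rw [hv a, Finset.sum_mul]
    rw [Finset.sum_eq_single x (fun y _ hy => horth a y x hy)
      (fun h => absurd (Finset.mem_univ x) h)]
  refine ⟨hiso, hcoiso, hp, ?_, ?_⟩
  · rw [hp]
    calc (star (u a x) * u a x) * (star (u a x) * u a x)
        = star (u a x) * (u a x * star (u a x) * u a x) := by simp [mul_assoc]
      _ = star (u a x) * u a x := by rw [efix a x]
  · rw [hp]; simp [star_mul]
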